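/- Let $N\geq3$, $a,b,q\in\mathbb{R}$ with $q>1$, and let $v$ be a $C^2$ positive function on $\mathbb{R}^N\setminus\{0\}$. Define the generalized Kelvin transform $\widehat{v}(x)=|x|^{2-N+2a}v(x/|x|^2)$ and $\widehat{b}=(N-2-2a)q-(N+2a+b+2)$. If $v$ solves $\mathrm{div}(|x|^{-2a}\nabla v)+d|x|^{-2(1+a)}v=|x|^{b}v^q$ in $\mathbb{R}^N\setminus\{0\}$, then $\widehat{v}$ solves the same equation with $b$ replaced by $\widehat{b}$, i.e., $\mathrm{div}(|x|^{-2a}\nabla \widehat{v})+d|x|^{-2(1+a)}\widehat{v}=|x|^{\widehat{b}}\widehat{v}^q$ in $\mathbb{R}^N\setminus\{0\}$. -/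

import Mathlib

open scoped BigOperators

open scoped BigOperators
open Topology Filter
noncomputable section Kelvin
variable {N : ℕ}
local notation "E" => EuclideanSpace ℝ (Fin N)

/- basic finite-dim helpers -/
lemma inner_single (z : E) (i : Fin N) :
    (inner ℝ z (EuclideanSpace.single i (1:ℝ)) : ℝ) = z i := by
  rw [EuclideanSpace.inner_single_right]; simp

lemma sum_single (x : E) : ∑ i : Fin N, x i • EuclideanSpace.single i (1:ℝ) = x := by
  ext j
  rw [show ((∑ i : Fin N, x i • EuclideanSpace.single i (1:ℝ)) j)
      = ∑ i : Fin N, (x i • EuclideanSpace.single i (1:ℝ)) j from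
    by rw [WithLp.ofLp_sum, Finset.sum_apply]]
  simp [EuclideanSpace.single_apply]

lemma clm_sum' {G : Type*} [NormedAddCommGroup G] [NormedSpace ℝ G]
    (T : E →L[ℝ] G) (x : E) :
    ∑ i : Fin N, x i • T (EuclideanSpace.single i (1:ℝ)) = T x := by
  have := congrArg T (sum_single x)
  rw [map_sum] at this
  simpa [ContinuousLinearMap.map_smul] using this

lemma clm_sum (T : E →L[ℝ] ℝ) (x : E) :
    ∑ i : Fin N, x i * T (EuclideanSpace.single i (1:ℝ)) = T x := by
  simpa [smul_eq_mul] using clm_sum' T x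

lemma inner_grad (f : E → ℝ) (x : E) : (inner ℝ x (gradient f x) : ℝ) = fderiv ℝ f x x := by
  rw [real_inner_comm, gradient, InnerProductSpace.toDual_symm_apply]

lemma sum_sq (x : E) : ∑ i : Fin N, x i * x i = ‖x‖ ^ 2 := by
  have h : (inner ℝ x x : ℝ) = ‖x‖ ^ 2 := real_inner_self_eq_norm_sq x
  rw [← h]
  simp only [PiLp.inner_apply, RCLike.inner_apply, conj_trivial]

/- the inversion map and Kelvin transform -/
def kg (z : E) : E := ((‖z‖:ℝ)^2)⁻¹ • z

def Dkg (z : E) : E →L[ℝ] E :=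
  ((‖z‖:ℝ)^2)⁻¹ • ContinuousLinearMap.id ℝ E
    + ((-(((‖z‖:ℝ)^2)^2)⁻¹) • (2 • innerSL ℝ z)).smulRight z

def kw (v : E → ℝ) (β : ℝ) (z : E) : ℝ := ((‖z‖:ℝ)^2) ^ β * v (kg z)

def Dkw (v : E → ℝ) (β : ℝ) (z : E) : E →L[ℝ] ℝ :=
  (2 * β * ((‖z‖:ℝ)^2) ^ (β-1) * v (kg z)) • innerSL ℝ z
    + (((‖z‖:ℝ)^2) ^ β) • ((fderiv ℝ v (kg z)).comp (Dkg z))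

lemma hS {z : E} (hz : z ≠ 0) : (0:ℝ) < ‖z‖^2 := pow_pos (norm_pos_iff.mpr hz) 2

lemma hasfderiv_normsq (z : E) :
    HasFDerivAt (fun u : E => (‖u‖:ℝ)^2) (2 • innerSL ℝ z) z :=
  (hasStrictFDerivAt_norm_sq z).hasFDerivAt

lemma hasfderiv_kg {z : E} (hz : z ≠ 0) : HasFDerivAt kg (Dkg z) z := by
  have h1 : HasFDerivAt (fun u : E => ((‖u‖:ℝ)^2)⁻¹)
      ((-(((‖z‖:ℝ)^2)^2)⁻¹) • (2 • innerSL ℝ z)) z :=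
    (hasDerivAt_inv (hS hz).ne').comp_hasFDerivAt z (hasfderiv_normsq z)
  exact h1.smul (hasFDerivAt_id z)

lemma Dkg_apply (z h : E) :
    Dkg z h = ((‖z‖:ℝ)^2)⁻¹ • h
      - (2 * (((‖z‖:ℝ)^2)^2)⁻¹ * (inner ℝ z h : ℝ)) • z := by
  simp only [Dkg, ContinuousLinearMap.add_apply, ContinuousLinearMap.smul_apply,
    ContinuousLinearMap.id_apply, ContinuousLinearMap.smulRight_apply, innerSL_apply_apply,
    smul_eq_mul, nsmul_eq_mul]
  rw [sub_eq_add_neg, ← neg_smul]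
  congr 1
  ring

lemma kg_ne {z : E} (hz : z ≠ 0) : kg z ≠ 0 :=
  smul_ne_zero (inv_ne_zero (hS hz).ne') hz

lemma hasfderiv_pow (c : ℝ) {z : E} (hz : z ≠ 0) :
    HasFDerivAt (fun u : E => ((‖u‖:ℝ)^2) ^ c)
      ((c * ((‖z‖:ℝ)^2) ^ (c-1)) • (2 • innerSL ℝ z)) z :=
  (hasfderiv_normsq z).rpow_const (Or.inl (hS hz).ne')

variable {v : EuclideanSpace ℝ (Fin N) → ℝ}

lemma hv_diff (hv : ContDiffOn ℝ 2 v {0}ᶜ) {y : E} (hy : y ≠ 0) : DifferentiableAt ℝ v y :=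
  (hv.contDiffAt (isOpen_compl_singleton.mem_nhds hy)).differentiableAt (by norm_num)

lemma hv_fdiff (hv : ContDiffOn ℝ 2 v {0}ᶜ) {y : E} (hy : y ≠ 0) :
    DifferentiableAt ℝ (fderiv ℝ v) y :=
  ((hv.fderiv_of_isOpen (m := 1) isOpen_compl_singleton (by norm_num)).differentiableOn (by norm_num)).differentiableAt
    (isOpen_compl_singleton.mem_nhds hy)

lemma hasfderiv_V (hv : ContDiffOn ℝ 2 v {0}ᶜ) {z : E} (hz : z ≠ 0) :
    HasFDerivAt (fun u : E => v (kg u)) ((fderiv ℝ v (kg z)).comp (Dkg z)) z :=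
  ((hv_diff hv (kg_ne hz)).hasFDerivAt).comp z (hasfderiv_kg hz)

lemma hasfderiv_kw (hv : ContDiffOn ℝ 2 v {0}ᶜ) (β : ℝ) {z : E} (hz : z ≠ 0) :
    HasFDerivAt (kw v β) (Dkw v β z) z := by
  have h := (hasfderiv_pow β hz).mul (hasfderiv_V hv hz)
  refine h.congr_fderiv ?_
  unfold Dkw
  ext h'
  simp only [ContinuousLinearMap.add_apply, ContinuousLinearMap.smul_apply,
    ContinuousLinearMap.coe_comp', Function.comp_apply, innerSL_apply_apply, smul_eq_mul,
    nsmul_eq_mul]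
  ring

/- the directional-derivative function -/
def ψ (v : E → ℝ) (β : ℝ) (i : Fin N) (z : E) : ℝ :=
  2*β*((‖z‖:ℝ)^2)^(β-1) * z i * v (kg z)
  + ((‖z‖:ℝ)^2)^(β-1) * fderiv ℝ v (kg z) (EuclideanSpace.single i 1)
  - 2 * ((‖z‖:ℝ)^2)^(β-2) * z i * fderiv ℝ v (kg z) z

lemma Dkw_single (β : ℝ) {z : E} (hz : z ≠ 0) (i : Fin N) :
    Dkw v β z (EuclideanSpace.single i 1) = ψ v β i z := by
  have hSz := hS hz
  simp only [Dkw, ψ, ContinuousLinearMap.add_apply, ContinuousLinearMap.smul_apply,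
    ContinuousLinearMap.coe_comp', Function.comp_apply, innerSL_apply_apply, Dkg_apply,
    map_sub, ContinuousLinearMap.map_smul, smul_eq_mul, inner_single]
  rw [Real.rpow_sub hSz β 1, Real.rpow_sub hSz β 2, Real.rpow_one, Real.rpow_two]
  field_simp
  ring


def Wf (v : E → ℝ) (β : ℝ) : E → ℝ :=
  fun u => ‖u‖ ^ (2*β) * v (((‖u‖:ℝ)^2)⁻¹ • u)

lemma W_eq_kw (β : ℝ) {u : E} (hu : u ≠ 0) : Wf v β u = kw v β u := by
  unfold Wf kw kg
  rw [Real.rpow_mul (norm_nonneg u), Real.rpow_two]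

lemma W_eventuallyEq (β : ℝ) {z : E} (hz : z ≠ 0) : Wf v β =ᶠ[𝓝 z] kw v β :=
  Filter.eventually_of_mem (isOpen_compl_singleton.mem_nhds hz)
    (fun u hu => W_eq_kw β (by simpa using hu))

lemma fderiv_W_single (hv : ContDiffOn ℝ 2 v {0}ᶜ) (β : ℝ) {z : E} (hz : z ≠ 0) (i : Fin N) :
    fderiv ℝ (Wf v β) z (EuclideanSpace.single i 1) = ψ v β i z := by
  rw [(W_eventuallyEq β hz).fderiv_eq, (hasfderiv_kw hv β hz).fderiv, Dkw_single β hz i]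

lemma fderiv_psi (hv : ContDiffOn ℝ 2 v {0}ᶜ) (β : ℝ) {x : E} (hx : x ≠ 0) (i : Fin N) :
    fderiv ℝ (ψ v β i) x (EuclideanSpace.single i 1) =
      2*β*((β-1) * ((‖x‖:ℝ)^2)^(β-1-1) * (2*(x i)) * (x i) * v (kg x)
           + ((‖x‖:ℝ)^2)^(β-1) * v (kg x)
           + ((‖x‖:ℝ)^2)^(β-1) * (x i) *
              ((((‖x‖:ℝ)^2))⁻¹ * fderiv ℝ v (kg x) (EuclideanSpace.single i 1)
                - 2*((((‖x‖:ℝ)^2))^2)⁻¹*(x i) * fderiv ℝ v (kg x) x))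
      + ((β-1) * ((‖x‖:ℝ)^2)^(β-1-1) * (2*(x i)) * fderiv ℝ v (kg x) (EuclideanSpace.single i 1)
           + ((‖x‖:ℝ)^2)^(β-1) *
              ((((‖x‖:ℝ)^2))⁻¹ * (fderiv ℝ (fderiv ℝ v) (kg x) (EuclideanSpace.single i 1) (EuclideanSpace.single i 1))
                - 2*((((‖x‖:ℝ)^2))^2)⁻¹*(x i) * (fderiv ℝ (fderiv ℝ v) (kg x) x (EuclideanSpace.single i 1))))
      - (2*((β-2) * ((‖x‖:ℝ)^2)^(β-2-1) * (2*(x i)) * (x i) * fderiv ℝ v (kg x) x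
           + ((‖x‖:ℝ)^2)^(β-2) * fderiv ℝ v (kg x) x
           + ((‖x‖:ℝ)^2)^(β-2) * (x i) *
              (fderiv ℝ v (kg x) (EuclideanSpace.single i 1)
                + (((‖x‖:ℝ)^2))⁻¹ * (fderiv ℝ (fderiv ℝ v) (kg x) (EuclideanSpace.single i 1) x)
                - 2*((((‖x‖:ℝ)^2))^2)⁻¹*(x i) * (fderiv ℝ (fderiv ℝ v) (kg x) x x)))) := by
  have h4 : HasFDerivAt (fun z : E => fderiv ℝ v (kg z))
      ((fderiv ℝ (fderiv ℝ v) (kg x)).comp (Dkg x)) x :=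
    ((hv_fdiff hv (kg_ne hx)).hasFDerivAt).comp x (hasfderiv_kg hx)
  have h5 := h4.clm_apply (hasFDerivAt_const (EuclideanSpace.single i (1:ℝ)) x)
  have h6 := h4.clm_apply (hasFDerivAt_id x)
  have h2 : HasFDerivAt (fun z : E => z i)
      (EuclideanSpace.proj (𝕜 := ℝ) (ι := Fin N) i) x :=
    (EuclideanSpace.proj (𝕜 := ℝ) (ι := Fin N) i).hasFDerivAt
  have h3 := hasfderiv_V hv hx
  have hT1 := (((hasfderiv_pow (β-1) hx).const_mul (2*β)).mul h2).mul h3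
  have hT2 := (hasfderiv_pow (β-1) hx).mul h5
  have hT3 := (((hasfderiv_pow (β-2) hx).const_mul 2).mul h2).mul h6
  have hψ := (hT1.add hT2).sub hT3
  rw [show ψ v β i = fun z : E =>
      (2*β*((‖z‖:ℝ)^2)^(β-1) * z i * v (kg z)
        + ((‖z‖:ℝ)^2)^(β-1) * fderiv ℝ v (kg z) (EuclideanSpace.single i 1))
      - 2 * ((‖z‖:ℝ)^2)^(β-2) * z i * fderiv ℝ v (kg z) z from rfl]
  rw [HasFDerivAt.fderiv (by exact hψ)]
  simp only [ContinuousLinearMap.add_apply, ContinuousLinearMap.sub_apply,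
    ContinuousLinearMap.smul_apply, ContinuousLinearMap.coe_comp', Function.comp_apply,
    ContinuousLinearMap.flip_apply, ContinuousLinearMap.zero_apply,
    ContinuousLinearMap.comp_zero, ContinuousLinearMap.zero_comp,
    ContinuousLinearMap.id_apply, ContinuousLinearMap.coe_id',
    innerSL_apply_apply, Dkg_apply, map_sub, ContinuousLinearMap.map_smul, smul_eq_mul,
    nsmul_eq_mul, Pi.mul_apply, inner_single, PiLp.proj_apply, EuclideanSpace.single_apply, if_pos rfl, id_eq,
    eq_self_iff_true, if_true]
  ring


lemma lap_v_eq (hv : ContDiffOn ℝ 2 v {0}ᶜ) {y : E} (hy : y ≠ 0) :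
    (∑ i : Fin N, fderiv ℝ (fun z => fderiv ℝ v z (EuclideanSpace.single i 1)) y
        (EuclideanSpace.single i 1))
      = ∑ i : Fin N,
      fderiv ℝ (fderiv ℝ v) y (EuclideanSpace.single i 1) (EuclideanSpace.single i 1) := by
  refine Finset.sum_congr rfl fun i _ => ?_
  rw [((hv_fdiff hv hy).hasFDerivAt.clm_apply
      (hasFDerivAt_const (EuclideanSpace.single i (1:ℝ)) y)).fderiv]
  simp

lemma lap_W (hv : ContDiffOn ℝ 2 v {0}ᶜ) (β : ℝ) {x : E} (hx : x ≠ 0) :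
    (∑ i : Fin N, fderiv ℝ (fun y => fderiv ℝ (Wf v β) y (EuclideanSpace.single i 1)) x
        (EuclideanSpace.single i 1))
      = 2*β*(2*β + N - 2) * ((‖x‖:ℝ)^2)^(β-1) * v (kg x)
        + ((‖x‖:ℝ)^2)^(β-2) * (∑ i : Fin N,
            fderiv ℝ (fun z => fderiv ℝ v z (EuclideanSpace.single i 1)) (kg x)
              (EuclideanSpace.single i 1))
        - 2*(2*β + N - 2) * ((‖x‖:ℝ)^2)^(β-2) * fderiv ℝ v (kg x) x := by
  have hSx := hS hx
  have step1 : ∀ i : Fin N,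
      fderiv ℝ (fun y => fderiv ℝ (Wf v β) y (EuclideanSpace.single i 1)) x
        (EuclideanSpace.single i 1)
      = fderiv ℝ (ψ v β i) x (EuclideanSpace.single i 1) := by
    intro i
    have heqi : (fun y => fderiv ℝ (Wf v β) y (EuclideanSpace.single i 1))
        =ᶠ[𝓝 x] ψ v β i :=
      Filter.eventually_of_mem (isOpen_compl_singleton.mem_nhds hx)
        (fun z hz => fderiv_W_single hv β (by simpa using hz) i)
    rw [heqi.fderiv_eq]
  rw [Finset.sum_congr rfl fun i _ => step1 i]
  rw [Finset.sum_congr rfl fun i _ => fderiv_psi hv β hx i]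
  rw [lap_v_eq hv (kg_ne hx)]
  -- abbreviations
  set S : ℝ := (‖x‖:ℝ)^2 with hSdef
  set V : ℝ := v (kg x) with hV
  set D1 : E →L[ℝ] ℝ := fderiv ℝ v (kg x) with hD1
  set H : E →L[ℝ] E →L[ℝ] ℝ := fderiv ℝ (fderiv ℝ v) (kg x) with hH
  have hsplit : ∀ i : Fin N,
      2*β*((β-1) * S^(β-1-1) * (2*(x i)) * (x i) * V
           + S^(β-1) * V
           + S^(β-1) * (x i) *
              (S⁻¹ * D1 (EuclideanSpace.single i 1)
                - 2*(S^2)⁻¹*(x i) * D1 x))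
      + ((β-1) * S^(β-1-1) * (2*(x i)) * D1 (EuclideanSpace.single i 1)
           + S^(β-1) *
              (S⁻¹ * (H (EuclideanSpace.single i 1) (EuclideanSpace.single i 1))
                - 2*(S^2)⁻¹*(x i) * (H x (EuclideanSpace.single i 1))))
      - (2*((β-2) * S^(β-2-1) * (2*(x i)) * (x i) * D1 x
           + S^(β-2) * D1 x
           + S^(β-2) * (x i) *
              (D1 (EuclideanSpace.single i 1)
                + S⁻¹ * (H (EuclideanSpace.single i 1) x)
                - 2*(S^2)⁻¹*(x i) * (H x x))))
      =
      (2*β*(β-1)*S^(β-1-1)*2*V - 2*2*(β-2)*S^(β-2-1)*D1 x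
          - 2*β*S^(β-1)*2*(S^2)⁻¹*D1 x + 2*S^(β-2)*2*(S^2)⁻¹*(H x x)) * (x i * x i)
      + (2*β*S^(β-1)*V - 2*S^(β-2)*D1 x)
      + (2*β*S^(β-1)*S⁻¹ + (β-1)*S^(β-1-1)*2 - 2*S^(β-2))
          * (x i * D1 (EuclideanSpace.single i 1))
      + (S^(β-1)*S⁻¹) * (H (EuclideanSpace.single i 1) (EuclideanSpace.single i 1))
      + (-(S^(β-1)*2*(S^2)⁻¹)) * (x i * (H x (EuclideanSpace.single i 1)))
      + (-(2*S^(β-2)*S⁻¹)) * (x i * (H (EuclideanSpace.single i 1) x)) := by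
    intro i; ring
  rw [Finset.sum_congr rfl fun i _ => hsplit i]
  simp only [Finset.sum_add_distrib, ← Finset.mul_sum, Finset.sum_const, Finset.card_univ,
    Fintype.card_fin, nsmul_eq_mul]
  have hs1 : ∑ i : Fin N, x i * x i = S := sum_sq x
  have hs2 : ∑ i : Fin N, x i * D1 (EuclideanSpace.single i 1) = D1 x := clm_sum D1 x
  have hs3 : ∑ i : Fin N, x i * (H x) (EuclideanSpace.single i 1) = (H x) x := clm_sum (H x) x
  have hs4 : ∑ i : Fin N, x i * (H (EuclideanSpace.single i 1)) x = (H x) x := by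
    have h := congrArg (fun T : E →L[ℝ] ℝ => T x) (clm_sum' H x)
    simpa [ContinuousLinearMap.sum_apply, ContinuousLinearMap.smul_apply,
      smul_eq_mul] using h
  rw [hs1, hs2, hs3, hs4]
  rw [show β-1-1 = β-2 from by ring, show β-2-1 = β-3 from by ring]
  have hk1 : S^(β-1) = S * S^(β-2) := by
    rw [show β-1 = 1 + (β-2) from by ring, Real.rpow_add hSx, Real.rpow_one]
  have hk2 : S^(β-2) = S * S^(β-3) := by
    rw [show β-2 = 1 + (β-3) from by ring, Real.rpow_add hSx, Real.rpow_one]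
  rw [hk1, hk2]
  field_simp
  ring

lemma grad_W (hv : ContDiffOn ℝ 2 v {0}ᶜ) (β : ℝ) {x : E} (hx : x ≠ 0) :
    (inner ℝ x (gradient (Wf v β) x) : ℝ)
      = 2*β*((‖x‖:ℝ)^2)^β * v (kg x) - ((‖x‖:ℝ)^2)^(β-1) * fderiv ℝ v (kg x) x := by
  have hSx := hS hx
  rw [inner_grad, (W_eventuallyEq β hx).fderiv_eq, (hasfderiv_kw hv β hx).fderiv]
  simp only [Dkw, ContinuousLinearMap.add_apply, ContinuousLinearMap.smul_apply,
    ContinuousLinearMap.coe_comp', Function.comp_apply, innerSL_apply_apply, Dkg_apply,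
    map_sub, ContinuousLinearMap.map_smul, smul_eq_mul]
  rw [real_inner_self_eq_norm_sq]
  rw [Real.rpow_sub hSx β 1, Real.rpow_one]
  field_simp
  ring


noncomputable def lap {N : ℕ} (u : EuclideanSpace ℝ (Fin N) → ℝ)
    (x : EuclideanSpace ℝ (Fin N)) : ℝ :=
  ∑ i : Fin N, fderiv ℝ (fun y => fderiv ℝ u y (EuclideanSpace.single i 1)) x
    (EuclideanSpace.single i 1)

theorem stmt_17 (N : ℕ) (hN : 3 ≤ N) (a b d q : ℝ) (hq : 1 < q)
    (v : EuclideanSpace ℝ (Fin N) → ℝ) (hv : ContDiffOn ℝ 2 v {0}ᶜ)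
    (hpos : ∀ x : EuclideanSpace ℝ (Fin N), x ≠ 0 → 0 < v x)
    (heq : ∀ x : EuclideanSpace ℝ (Fin N), x ≠ 0 →
      ‖x‖ ^ (-2 * a) * lap v x
        - 2 * a * ‖x‖ ^ (-2 * a - 2) * (inner ℝ x (gradient v x) : ℝ)
        + d * ‖x‖ ^ (-2 * (1 + a)) * v x = ‖x‖ ^ b * v x ^ q) :
    ∀ x : EuclideanSpace ℝ (Fin N), x ≠ 0 →
      ‖x‖ ^ (-2 * a) * lap (fun y => ‖y‖ ^ ((2 : ℝ) - N + 2 * a) * v ((‖y‖ ^ 2)⁻¹ • y)) x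
        - 2 * a * ‖x‖ ^ (-2 * a - 2)
          * (inner ℝ x (gradient (fun y => ‖y‖ ^ ((2 : ℝ) - N + 2 * a) * v ((‖y‖ ^ 2)⁻¹ • y)) x) : ℝ)
        + d * ‖x‖ ^ (-2 * (1 + a)) * (‖x‖ ^ ((2 : ℝ) - N + 2 * a) * v ((‖x‖ ^ 2)⁻¹ • x))
      = ‖x‖ ^ (((N : ℝ) - 2 - 2 * a) * q - ((N : ℝ) + 2 * a + b + 2))
          * (‖x‖ ^ ((2 : ℝ) - N + 2 * a) * v ((‖x‖ ^ 2)⁻¹ • x)) ^ q := by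
  intro x hx
  have ht : (0:ℝ) < ‖x‖ := norm_pos_iff.mpr hx
  set β : ℝ := ((2 : ℝ) - N + 2 * a) / 2 with hβdef
  have hβ : (2 : ℝ) - N + 2 * a = 2 * β := by rw [hβdef]; ring
  rw [hβ]
  rw [show (fun y : EuclideanSpace ℝ (Fin N) => ‖y‖ ^ (2*β) * v ((‖y‖ ^ 2)⁻¹ • y))
      = Wf v β from rfl]
  have hy : kg x ≠ 0 := kg_ne hx
  rw [show (((‖x‖:ℝ)^2)⁻¹ • x : EuclideanSpace ℝ (Fin N)) = kg x from rfl]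
  -- unfold lap of the transform
  rw [show lap (Wf v β) x = ∑ i : Fin N,
      fderiv ℝ (fun y => fderiv ℝ (Wf v β) y (EuclideanSpace.single i 1)) x
        (EuclideanSpace.single i 1) from rfl]
  rw [lap_W hv β hx, grad_W hv β hx]
  rw [show (∑ i : Fin N, fderiv ℝ (fun z => fderiv ℝ v z (EuclideanSpace.single i 1)) (kg x)
      (EuclideanSpace.single i 1)) = lap v (kg x) from rfl]
  -- norms and powers
  have hnn := norm_nonneg x
  have hpow : ∀ c : ℝ, ((‖x‖:ℝ)^2) ^ c = ‖x‖ ^ (2 * c) := by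
    intro c
    rw [← Real.rpow_two, ← Real.rpow_mul hnn]
  have hSinv : ((‖x‖:ℝ)^2)⁻¹ = ‖x‖ ^ (-2 : ℝ) := by
    rw [show (-2:ℝ) = -(2:ℝ) from rfl, Real.rpow_neg hnn, Real.rpow_two]
  have hcinv : ∀ c : ℝ, (‖x‖⁻¹) ^ c = ‖x‖ ^ (-c) := by
    intro c
    rw [Real.inv_rpow hnn, ← Real.rpow_neg hnn]
  have hny : ‖kg x‖ = ‖x‖⁻¹ := by
    rw [show kg x = ((‖x‖:ℝ)^2)⁻¹ • x from rfl, norm_smul, Real.norm_eq_abs,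
      abs_of_pos (inv_pos.mpr (hS hx)), pow_two]
    field_simp
  -- the equation for v at the inverted point
  have h0 := heq (kg x) hy
  rw [hny] at h0
  rw [inner_grad] at h0
  rw [show fderiv ℝ v (kg x) (kg x)
      = ((‖x‖:ℝ)^2)⁻¹ * fderiv ℝ v (kg x) x from by
    rw [show kg x = ((‖x‖:ℝ)^2)⁻¹ • x from rfl]
    conv_lhs => rw [(fderiv ℝ v (((‖x‖:ℝ)^2)⁻¹ • x)).map_smul]
    rw [smul_eq_mul]] at h0
  simp only [hcinv, hSinv] at h0
  set Λ : ℝ := lap v (kg x) with hΛ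
  set A : ℝ := fderiv ℝ v (kg x) x with hA
  set V : ℝ := v (kg x) with hV
  have hVpos : 0 < V := hpos (kg x) hy
  have hmul : ∀ c₁ c₂ : ℝ, ‖x‖ ^ c₁ * ‖x‖ ^ c₂ = ‖x‖ ^ (c₁ + c₂) :=
    fun c₁ c₂ => (Real.rpow_add ht c₁ c₂).symm
  -- normalize h0
  have hC : ‖x‖ ^ (2*a) * Λ - 2*a*(‖x‖ ^ (2*a) * A) + d*(‖x‖ ^ (2*a+2) * V)
      = ‖x‖ ^ (-b) * V ^ q := by
    linear_combination (norm := ring_nf) h0 + (2*a*A) * hmul (-(-2*a-2)) (-2)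
  -- expand RHS power
  rw [Real.mul_rpow (Real.rpow_nonneg hnn _) hVpos.le, ← Real.rpow_mul hnn]
  simp only [hpow, hSinv]
  rw [show (((N:ℝ) - 2 - 2*a) * q - ((N:ℝ) + 2*a + b + 2))
      = (2*β - 4*a - 4 - b) + (-(2*β))*q from by rw [hβdef]; ring]
  rw [show (2*β + (N:ℝ) - 2) = 2*a from by rw [hβdef]; ring]
  calc ‖x‖ ^ (-2 * a) *
        (2*β*(2*a) * ‖x‖ ^ (2*(β-1)) * V + ‖x‖ ^ (2*(β-2)) * Λ
          - 2*(2*a) * ‖x‖ ^ (2*(β-2)) * A)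
      - 2 * a * ‖x‖ ^ (-2 * a - 2) * (2*β*‖x‖ ^ (2*β) * V - ‖x‖ ^ (2*(β-1)) * A)
      + d * ‖x‖ ^ (-2 * (1 + a)) * (‖x‖ ^ (2*β) * V)
      = ‖x‖ ^ (2*β - 4*a - 4) *
          (‖x‖ ^ (2*a) * Λ - 2*a*(‖x‖ ^ (2*a) * A) + d*(‖x‖ ^ (2*a+2) * V)) := by
        linear_combination (norm := ring_nf)
          (4*a*β*V) * hmul (-2*a) (2*(β-1))
          + Λ * hmul (-2*a) (2*(β-2))
          - (4*a*A) * hmul (-2*a) (2*(β-2))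
          - (4*a*β*V) * hmul (-2*a-2) (2*β)
          + (2*a*A) * hmul (-2*a-2) (2*(β-1))
          + (d*V) * hmul (-2*(1+a)) (2*β)
          - Λ * hmul (2*β-4*a-4) (2*a)
          + (2*a*A) * hmul (2*β-4*a-4) (2*a)
          - (d*V) * hmul (2*β-4*a-4) (2*a+2)
    _ = ‖x‖ ^ (2*β - 4*a - 4) * (‖x‖ ^ (-b) * V ^ q) := by rw [hC]
    _ = ‖x‖ ^ ((2*β - 4*a - 4 - b) + (-(2*β))*q) * (‖x‖ ^ (2*β*q) * V ^ q) := by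
        linear_combination (norm := ring_nf)
          (V^q) * hmul (2*β-4*a-4) (-b)
          - (V^q) * hmul ((2*β - 4*a - 4 - b) + (-(2*β))*q) (2*β*q)

end Kelvin
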